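/- Let τ be a positive integer such that 2^{2^τ} − 1 has at least two distinct primitive prime divisors. For each 1 ≤ j ≤ τ, let p_j be a primitive prime divisor of 2^{2^j} − 1, and define ℓ_j = 1 if p_j divides b, ℓ_j = p_j if b ≡ 1 (mod p_j), and ℓ_j = ord_{p_j}(b) otherwise (the multiplicative order of b modulo p_j). Let L = lcm(2, ℓ_1, ℓ_2, …, ℓ_τ), and let q be a primitive prime divisor of 2^{2^τ} − 1 with q ≠ p_τ. Let b > 2 be an integer not divisible by q satisfying one of: (i) b ≡ 1 (mod q) and q does not divide L; (ii) b ≢ 1 (mod q) and there exists an integer t with (b^t − 1)/(b − 1) ≡ −1 (mod q) and t ≡ 1 (mod L). Then there exist infinitely many positive integers t such that the b-repunit (b^t − 1)/(b − 1) is a Sierpiński number. -/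
import Mathlib


/-- A number is composite if it is a product of two integers greater than 1. -/
def IsComposite (n : ℕ) : Prop := ∃ a b : ℕ, 1 < a ∧ 1 < b ∧ n = a * b

/-- A Sierpiński number is an odd positive integer `k` such that `k·2^n + 1` is composite
for every positive integer `n`. -/
def IsSierpinski (k : ℕ) : Prop := 0 < k ∧ Odd k ∧ ∀ n : ℕ, 0 < n → IsComposite (k * 2 ^ n + 1)

/-- A prime `p` is a primitive prime divisor of `2^m − 1` if `p ∣ 2^m − 1` and
`p ∤ 2^μ − 1` for every positive integer `μ < m`. -/
def IsPrimitivePrimeDivisor (p m : ℕ) : Prop :=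
  p.Prime ∧ p ∣ 2 ^ m - 1 ∧ ∀ μ : ℕ, 0 < μ → μ < m → ¬ p ∣ 2 ^ μ - 1

lemma geom_nat (b : ℕ) (hb : 1 ≤ b) (t : ℕ) :
    (b - 1) * (∑ i ∈ Finset.range t, b ^ i) = b ^ t - 1 := by
  induction t with
  | zero => simp
  | succ t ih =>
    rw [Finset.sum_range_succ, Nat.mul_add, ih, pow_succ]
    have h1 : 1 ≤ b ^ t := Nat.one_le_pow _ _ (by omega)
    have h2 : (b - 1) * b ^ t = b ^ t * b - b ^ t := by
      rw [Nat.sub_mul, one_mul, mul_comm]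
    have h3 : b ^ t ≤ b ^ t * b := Nat.le_mul_of_pos_right _ (by omega)
    omega

lemma repunit_eq (b : ℕ) (hb : 2 ≤ b) (t : ℕ) :
    (b ^ t - 1) / (b - 1) = ∑ i ∈ Finset.range t, b ^ i := by
  rw [← geom_nat b (by omega) t, mul_comm]
  exact Nat.mul_div_cancel _ (by omega)

lemma comp_of_dvd {d N : ℕ} (hd : 1 < d) (hdvd : d ∣ N) (hN : d < N) : IsComposite N := by
  obtain ⟨e, he⟩ := hdvd
  refine ⟨d, e, hd, ?_, he⟩
  by_contra h
  push_neg at h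
  interval_cases e <;> omega

lemma sq_sub_one (x : ℕ) (hx : 1 ≤ x) : x * x - 1 = (x - 1) * (x + 1) := by
  rcases Nat.exists_eq_add_of_le hx with ⟨n, hn⟩
  subst hn
  have h : (1 + n) * (1 + n) = n * (1 + n + 1) + 1 := by ring
  simp only [Nat.add_sub_cancel_left, h]
  omega

lemma ppd_neg_one (p e : ℕ) (h : IsPrimitivePrimeDivisor p (2 ^ (e + 1))) :
    (2 : ZMod p) ^ (2 ^ e) = -1 := by
  obtain ⟨hp, hdvd, hmin⟩ := h
  have hx1 : 1 ≤ 2 ^ 2 ^ e := Nat.one_le_two_pow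
  have hxx : 2 ^ 2 ^ (e + 1) = 2 ^ 2 ^ e * 2 ^ 2 ^ e := by
    rw [← pow_add]
    congr 1
    ring
  rw [hxx, sq_sub_one _ hx1] at hdvd
  have hnot : ¬ p ∣ 2 ^ 2 ^ e - 1 := hmin (2 ^ e) (by positivity) (by
    apply Nat.pow_lt_pow_right <;> omega)
  have hdvd2 : p ∣ 2 ^ 2 ^ e + 1 := ((Nat.Prime.dvd_mul hp).mp hdvd).resolve_left hnot
  have h0 : ((2 ^ 2 ^ e + 1 : ℕ) : ZMod p) = 0 := (ZMod.natCast_eq_zero_iff _ _).mpr hdvd2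
  push_cast at h0
  linear_combination h0

lemma ppd_odd (p m : ℕ) (hm : 0 < m) (h : IsPrimitivePrimeDivisor p m) : Odd p := by
  obtain ⟨hp, hdvd, -⟩ := h
  rcases hp.eq_two_or_odd' with h2 | ho
  · exfalso
    subst h2
    rcases hdvd with ⟨c, hc⟩
    have h2m : 2 ^ m = 2 * 2 ^ (m - 1) := by
      rw [← pow_succ']
      congr 1
      omega
    have h1 : 1 ≤ 2 ^ (m - 1) := Nat.one_le_two_pow
    omega
  · exact ho

lemma ord_pos (p b : ℕ) (hp : p.Prime) (hpb : ¬ p ∣ b) : 0 < orderOf (b : ZMod p) := by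
  haveI := Fact.mk hp
  have hb0 : (b : ZMod p) ≠ 0 := fun h => hpb ((ZMod.natCast_eq_zero_iff _ _).mp h)
  exact (isOfFinOrder_iff_pow_eq_one.mpr
    ⟨p - 1, by have := hp.two_le; omega, ZMod.pow_card_sub_one_eq_one hb0⟩).orderOf_pos

lemma cast_sum_pow (n b t : ℕ) :
    ((∑ i ∈ Finset.range t, b ^ i : ℕ) : ZMod n) = ∑ i ∈ Finset.range t, (b : ZMod n) ^ i := by
  push_cast
  rfl

lemma K_ge (b t : ℕ) (hb : 1 ≤ b) : t ≤ ∑ i ∈ Finset.range t, b ^ i := by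
  have h := Finset.sum_le_sum (s := Finset.range t) (f := fun _ : ℕ => 1)
    (g := fun i => b ^ i) (fun i _ => Nat.one_le_pow _ _ (by omega))
  simpa using h

lemma K_odd (b t : ℕ) (ht : Odd t) : Odd (∑ i ∈ Finset.range t, b ^ i) := by
  have ht1 : 1 ≤ t := ht.pos
  rw [Nat.odd_iff, ← Nat.not_even_iff]
  rintro ⟨c, hc⟩
  have h2 : 2 ∣ ∑ i ∈ Finset.range t, b ^ i := ⟨c, by omega⟩
  have h0 : ((∑ i ∈ Finset.range t, b ^ i : ℕ) : ZMod 2) = 0 :=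
    (ZMod.natCast_eq_zero_iff _ _).mpr h2
  rw [cast_sum_pow] at h0
  rcases Nat.even_or_odd b with hbe | hbo
  · have hb0 : (b : ZMod 2) = 0 :=
      (ZMod.natCast_eq_zero_iff _ _).mpr hbe.two_dvd
    rw [hb0, Finset.sum_eq_single 0 (fun i _ hi => zero_pow hi)
      (fun h => absurd (Finset.mem_range.mpr (by omega)) h)] at h0
    simp at h0
  · have hb1 : (b : ZMod 2) = 1 := by
      have : b ≡ 1 [MOD 2] := by
        have := Nat.odd_iff.mp hbo
        rw [Nat.ModEq]
        omega
      have := (ZMod.natCast_eq_natCast_iff b 1 2).mpr this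
      simpa using this
    rw [hb1] at h0
    simp only [one_pow, Finset.sum_const, Finset.card_range, smul_eq_mul, mul_one] at h0
    have : t ≡ 0 [MOD 2] := (ZMod.natCast_eq_natCast_iff t 0 2).mp (by simpa using h0)
    rw [Nat.ModEq] at this
    have := Nat.odd_iff.mp ht
    omega

lemma K_eq_one (p b t : ℕ) (hp : p.Prime) (ht : 1 ≤ t) (ℓj : ℕ)
    (hℓj : ℓj = if p ∣ b then 1 else if b ≡ 1 [MOD p] then p else orderOf (b : ZMod p))
    (hdvd : ℓj ∣ t - 1) :
    ((∑ i ∈ Finset.range t, b ^ i : ℕ) : ZMod p) = 1 := by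
  haveI := Fact.mk hp
  rw [cast_sum_pow]
  by_cases h1 : p ∣ b
  · have hb0 : (b : ZMod p) = 0 := (ZMod.natCast_eq_zero_iff _ _).mpr h1
    rw [hb0, Finset.sum_eq_single 0 (fun i _ hi => zero_pow hi)
      (fun h => absurd (Finset.mem_range.mpr (by omega)) h)]
    simp
  · by_cases h2 : b ≡ 1 [MOD p]
    · have hb1 : (b : ZMod p) = 1 := by
        have := (ZMod.natCast_eq_natCast_iff b 1 p).mpr h2
        simpa using this
      rw [hb1]
      simp only [one_pow, Finset.sum_const, Finset.card_range, smul_eq_mul, mul_one]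
      have hpd : p ∣ t - 1 := by
        rw [hℓj, if_neg h1, if_pos h2] at hdvd
        exact hdvd
      have hmod : t ≡ 1 [MOD p] := ((Nat.modEq_iff_dvd' ht).mpr hpd).symm
      have := (ZMod.natCast_eq_natCast_iff t 1 p).mpr hmod
      simpa using this
    · have hord : orderOf (b : ZMod p) ∣ t - 1 := by
        rw [hℓj, if_neg h1, if_neg h2] at hdvd
        exact hdvd
      have hx1 : (b : ZMod p) ≠ 1 := by
        intro hx
        exact h2 ((ZMod.natCast_eq_natCast_iff b 1 p).mp (by simpa using hx))
      have hxt : (b : ZMod p) ^ t = (b : ZMod p) := by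
        obtain ⟨k, hk⟩ := hord
        have hts : t = 1 + orderOf (b : ZMod p) * k := by omega
        rw [hts, pow_add, pow_one, pow_mul, pow_orderOf_eq_one, one_pow, mul_one]
      have hgeom := geom_sum_mul (b : ZMod p) t
      rw [hxt] at hgeom
      have h1x : (∑ i ∈ Finset.range t, (b : ZMod p) ^ i) * ((b : ZMod p) - 1)
          = 1 * ((b : ZMod p) - 1) := by rw [hgeom]; ring
      exact mul_right_cancel₀ (sub_ne_zero.mpr hx1) h1x

lemma K_eq_of_pow_eq (q b s t : ℕ) (hq : q.Prime) (hbne : ¬ b ≡ 1 [MOD q])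
    (hpow : (b : ZMod q) ^ t = (b : ZMod q) ^ s) :
    ((∑ i ∈ Finset.range t, b ^ i : ℕ) : ZMod q)
      = ((∑ i ∈ Finset.range s, b ^ i : ℕ) : ZMod q) := by
  haveI := Fact.mk hq
  have hx1 : (b : ZMod q) ≠ 1 := by
    intro hx
    exact hbne ((ZMod.natCast_eq_natCast_iff b 1 q).mp (by simpa using hx))
  rw [cast_sum_pow, cast_sum_pow]
  have h1 := geom_sum_mul (b : ZMod q) t
  have h2 := geom_sum_mul (b : ZMod q) s
  rw [hpow] at h1
  exact mul_right_cancel₀ (sub_ne_zero.mpr hx1) (h1.trans h2.symm)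


/-- Let `τ ≥ 1` be such that `2^{2^τ} − 1` has at least two distinct
primitive prime divisors.  For each `1 ≤ j ≤ τ` let `p_j` be a primitive prime divisor of
`2^{2^j} − 1` and define `ℓ_j = 1` if `p_j ∣ b`, `ℓ_j = p_j` if `b ≡ 1 (mod p_j)`, and
`ℓ_j = ord_{p_j}(b)` otherwise.  Let `L = lcm(2, ℓ_1, …, ℓ_τ)` and let `q` be a primitive
prime divisor of `2^{2^τ} − 1` with `q ≠ p_τ`.  If `b > 2` is an integer with `q ∤ b`
satisfying (i) `b ≡ 1 (mod q)` and `q ∤ L`, or (ii) `b ≢ 1 (mod q)` and there exists `t`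
with `(b^t − 1)/(b − 1) ≡ −1 (mod q)` and `t ≡ 1 (mod L)`, then there exist infinitely
many positive integers `t` such that the `b`-repunit `(b^t − 1)/(b − 1)` is a Sierpiński
number.  (Here `p_j` is indexed by `j : Fin τ`, with `p ⟨j⟩` a primitive prime divisor of
`2^{2^{j+1}} − 1`, so `p_τ` is `p ⟨τ−1⟩`.) -/
theorem stmt_12 (τ : ℕ) (hτ : 0 < τ)
    (htwo : ∃ q₁ q₂ : ℕ, q₁ ≠ q₂ ∧ IsPrimitivePrimeDivisor q₁ (2 ^ τ) ∧
      IsPrimitivePrimeDivisor q₂ (2 ^ τ))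
    (b : ℕ) (hb : 2 < b)
    (p : Fin τ → ℕ) (hp : ∀ j : Fin τ, IsPrimitivePrimeDivisor (p j) (2 ^ (j.val + 1)))
    (ℓ : Fin τ → ℕ)
    (hℓ : ∀ j : Fin τ, ℓ j = if p j ∣ b then 1 else if b ≡ 1 [MOD p j] then p j
      else orderOf (b : ZMod (p j)))
    (L : ℕ) (hL : L = Nat.lcm 2 (Finset.univ.lcm ℓ))
    (q : ℕ) (hq : IsPrimitivePrimeDivisor q (2 ^ τ)) (hqp : q ≠ p ⟨τ - 1, by omega⟩)
    (hqb : ¬ q ∣ b)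
    (hcond : (b ≡ 1 [MOD q] ∧ ¬ q ∣ L) ∨
      (¬ b ≡ 1 [MOD q] ∧ ∃ t : ℕ,
        (((b ^ t - 1) / (b - 1) : ℕ) : ℤ) ≡ -1 [ZMOD (q : ℤ)] ∧ t ≡ 1 [MOD L])) :
    {t : ℕ | 0 < t ∧ IsSierpinski ((b ^ t - 1) / (b - 1))}.Infinite := by
  clear htwo hqp
  obtain ⟨hqprime, hqdvd, hqmin⟩ := hq
  haveI : Fact q.Prime := ⟨hqprime⟩
  have hqodd : Odd q := ppd_odd q (2 ^ τ) (by positivity) ⟨hqprime, hqdvd, hqmin⟩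
  have hq2pow : (2 : ZMod q) ^ 2 ^ τ = 1 := by
    have h1 : (1 : ℕ) ≤ 2 ^ 2 ^ τ := Nat.one_le_two_pow
    have h0 : ((2 ^ 2 ^ τ - 1 : ℕ) : ZMod q) = 0 :=
      (ZMod.natCast_eq_zero_iff _ _).mpr hqdvd
    push_cast [h1] at h0
    linear_combination h0
  have hpprime : ∀ j, (p j).Prime := fun j => (hp j).1
  have hpneg : ∀ j : Fin τ, (2 : ZMod (p j)) ^ 2 ^ j.val = -1 := fun j => ppd_neg_one _ _ (hp j)
  -- ℓ and L facts
  have hℓpos : ∀ j, 0 < ℓ j := by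
    intro j
    rw [hℓ j]
    split
    · exact one_pos
    · split
      · exact (hpprime j).pos
      · exact ord_pos _ _ (hpprime j) (by assumption)
  have hLpos : 0 < L := by
    rw [hL]
    have hX : Finset.univ.lcm ℓ ≠ 0 := by
      rw [Ne, Finset.lcm_eq_zero_iff]
      rintro ⟨j, -, hj⟩
      exact absurd hj ((hℓpos j).ne')
    exact Nat.pos_of_ne_zero (Nat.lcm_ne_zero two_ne_zero hX)
  have hℓL : ∀ j, ℓ j ∣ L := fun j =>
    (Finset.dvd_lcm (Finset.mem_univ j)).trans (hL ▸ Nat.dvd_lcm_right _ _)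
  have h2L : 2 ∣ L := hL ▸ Nat.dvd_lcm_left _ _
  -- unified construction of t₀ and period P
  obtain ⟨t0, P, hPpos, hmain⟩ :
      ∃ t0 P : ℕ, 0 < P ∧ ∀ m : ℕ, (t0 + m * P) ≡ 1 [MOD L] ∧
        (((∑ i ∈ Finset.range (t0 + m * P), b ^ i : ℕ) : ZMod q) = -1) := by
    rcases hcond with ⟨hb1q, hqL⟩ | ⟨hbne, s, hs1, hs2⟩
    · have hco : L.Coprime q := ((hqprime.coprime_iff_not_dvd).mpr hqL).symm
      obtain ⟨k, hk1, hk2⟩ := Nat.chineseRemainder hco 1 (q - 1)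
      refine ⟨k, L * q, Nat.mul_pos hLpos hqprime.pos, fun m => ⟨?_, ?_⟩⟩
      · calc k + m * (L * q) ≡ k + 0 [MOD L] :=
              Nat.ModEq.add_left k ((Nat.modEq_zero_iff_dvd).mpr ⟨m * q, by ring⟩)
          _ = k := by ring
          _ ≡ 1 [MOD L] := hk1
      · have hbz : (b : ZMod q) = 1 := by
          have := (ZMod.natCast_eq_natCast_iff b 1 q).mpr hb1q
          simpa using this
        rw [cast_sum_pow, hbz]
        simp only [one_pow, Finset.sum_const, Finset.card_range, nsmul_eq_mul, mul_one]
        have htq : (k + m * (L * q)) ≡ q - 1 [MOD q] := by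
          calc k + m * (L * q) ≡ k + 0 [MOD q] :=
                Nat.ModEq.add_left k ((Nat.modEq_zero_iff_dvd).mpr ⟨m * L, by ring⟩)
            _ = k := by ring
            _ ≡ q - 1 [MOD q] := hk2
        have hcast := (ZMod.natCast_eq_natCast_iff _ _ q).mpr htq
        rw [hcast, Nat.cast_sub hqprime.one_le]
        simp
    · -- case (ii)
      set d : ℕ := orderOf (b : ZMod q) with hd
      have hdpos : 0 < d := ord_pos _ _ hqprime hqb
      have hs1' : ((∑ i ∈ Finset.range s, b ^ i : ℕ) : ZMod q) = -1 := by
        rw [repunit_eq b (by omega) s] at hs1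
        rw [cast_sum_pow]
        have := (ZMod.intCast_eq_intCast_iff _ _ q).mpr hs1
        push_cast at this
        exact this
      refine ⟨s, Nat.lcm L d, Nat.pos_of_ne_zero (Nat.lcm_ne_zero hLpos.ne' hdpos.ne'),
        fun m => ⟨?_, ?_⟩⟩
      · obtain ⟨c, hc⟩ := Nat.dvd_lcm_left L d
        calc s + m * Nat.lcm L d ≡ s + 0 [MOD L] :=
              Nat.ModEq.add_left s ((Nat.modEq_zero_iff_dvd).mpr ⟨m * c, by rw [hc]; ring⟩)
          _ = s := by ring
          _ ≡ 1 [MOD L] := hs2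
      · rw [K_eq_of_pow_eq q b s _ hqprime hbne, hs1']
        obtain ⟨c, hc⟩ := Nat.dvd_lcm_right L d
        rw [hc, pow_add, show m * (d * c) = d * (m * c) by ring, pow_mul,
          pow_orderOf_eq_one, one_pow, mul_one]
  -- bound
  set B : ℕ := q + ∑ j : Fin τ, p j with hB
  have hpB : ∀ j, p j ≤ B := by
    intro j
    have : p j ≤ ∑ j : Fin τ, p j :=
      Finset.single_le_sum (fun _ _ => Nat.zero_le _) (Finset.mem_univ j)
    omega
  have hqB : q ≤ B := by omega
  -- conclude
  refine Set.infinite_of_injective_forall_mem (f := fun m : ℕ => t0 + (B + 1 + m) * P) ?_ ?_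
  · intro a c hac
    simp only at hac
    have := Nat.eq_of_mul_eq_mul_right hPpos (Nat.add_left_cancel hac)
    omega
  · intro m
    obtain ⟨htL, htq⟩ := hmain (B + 1 + m)
    set t : ℕ := t0 + (B + 1 + m) * P with htdef
    have htB : B + 1 ≤ t := by
      have h1 : B + 1 + m ≤ (B + 1 + m) * P := Nat.le_mul_of_pos_right _ hPpos
      omega
    have ht1 : 1 ≤ t := by omega
    have hdvdL : L ∣ t - 1 := (Nat.modEq_iff_dvd' ht1).mp htL.symm
    have htodd : Odd t := by
      obtain ⟨c, hc⟩ := h2L.trans hdvdL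
      rw [Nat.odd_iff]
      omega
    have hKget : t ≤ ∑ i ∈ Finset.range t, b ^ i := K_ge b t (by omega)
    simp only [Set.mem_setOf_eq]
    rw [repunit_eq b (by omega) t]
    refine ⟨by omega, by omega, K_odd b t htodd, ?_⟩
    intro n hn
    obtain ⟨k, c, hcodd, hneq⟩ := Nat.exists_eq_two_pow_mul_odd (by omega : n ≠ 0)
    by_cases hk : k < τ
    · -- covered by p ⟨k, hk⟩
      set j : Fin τ := ⟨k, hk⟩ with hj
      haveI : Fact (p j).Prime := ⟨hpprime j⟩
      have h2n : (2 : ZMod (p j)) ^ n = -1 := by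
        rw [hneq, pow_mul, hpneg j]
        exact hcodd.neg_one_pow
      have hK1 : ((∑ i ∈ Finset.range t, b ^ i : ℕ) : ZMod (p j)) = 1 :=
        K_eq_one (p j) b t (hpprime j) ht1 (ℓ j) (hℓ j) ((hℓL j).trans hdvdL)
      have hdvd : p j ∣ (∑ i ∈ Finset.range t, b ^ i) * 2 ^ n + 1 := by
        have h0 : (((∑ i ∈ Finset.range t, b ^ i) * 2 ^ n + 1 : ℕ) : ZMod (p j)) = 0 := by
          rw [Nat.cast_add, Nat.cast_mul, Nat.cast_pow, Nat.cast_one, Nat.cast_ofNat,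
            hK1, h2n]
          ring
        exact (ZMod.natCast_eq_zero_iff _ _).mp h0
      refine comp_of_dvd (hpprime j).one_lt hdvd ?_
      have h2n' : (1 : ℕ) ≤ 2 ^ n := Nat.one_le_two_pow
      have hmul : ∑ i ∈ Finset.range t, b ^ i ≤ (∑ i ∈ Finset.range t, b ^ i) * 2 ^ n :=
        Nat.le_mul_of_pos_right _ (by omega)
      have := hpB j
      omega
    · -- covered by q
      have hdvdn : 2 ^ τ ∣ n := by
        rw [hneq]
        exact Dvd.dvd.mul_right (pow_dvd_pow 2 (by omega)) c
      obtain ⟨c', hc'⟩ := hdvdn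
      have h2n : (2 : ZMod q) ^ n = 1 := by
        rw [hc', pow_mul, hq2pow, one_pow]
      have hdvd : q ∣ (∑ i ∈ Finset.range t, b ^ i) * 2 ^ n + 1 := by
        have h0 : (((∑ i ∈ Finset.range t, b ^ i) * 2 ^ n + 1 : ℕ) : ZMod q) = 0 := by
          rw [Nat.cast_add, Nat.cast_mul, Nat.cast_pow, Nat.cast_one, Nat.cast_ofNat,
            htq, h2n]
          ring
        exact (ZMod.natCast_eq_zero_iff _ _).mp h0
      refine comp_of_dvd hqprime.one_lt hdvd ?_
      have h2n' : (1 : ℕ) ≤ 2 ^ n := Nat.one_le_two_pow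
      have hmul : ∑ i ∈ Finset.range t, b ^ i ≤ (∑ i ∈ Finset.range t, b ^ i) * 2 ^ n :=
        Nat.le_mul_of_pos_right _ (by omega)
      omega
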